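/- Let r ≥ 0 and let X be a finite quasimetric space. Then X has an r-deformation retract M ⊆ X which is r-minimal; in fact, any r-deformation retract of X of minimal possible cardinality is r-minimal. In particular, every finite quasimetric space has an r-minimal model, which can moreover be chosen to be an r-deformation retract of X. -/

import Mathlib

open scoped ENNReal

class QuasiMetric (X : Type*) where
  qdist : X → X → ℝ≥0∞
  qdist_triangle : ∀ x y z : X, qdist x z ≤ qdist x y + qdist y z
  qdist_eq_zero_iff : ∀ x y : X, qdist x y = 0 ↔ x = y

open QuasiMetric

instance {X : Type*} [QuasiMetric X] (A : Set X) : QuasiMetric A where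
  qdist a b := qdist a.1 b.1
  qdist_triangle a b c := qdist_triangle a.1 b.1 c.1
  qdist_eq_zero_iff a b := (qdist_eq_zero_iff a.1 b.1).trans Subtype.coe_inj

/-- A map of quasimetric spaces is short (1-Lipschitz). -/
def IsShort {X Y : Type*} [QuasiMetric X] [QuasiMetric Y] (f : X → Y) : Prop :=
  ∀ x x' : X, qdist (f x) (f x') ≤ qdist x x'

/-- The distance `d(f,g) = sup_x d(f x, g x)` on maps. -/
noncomputable def mapDist {X Y : Type*} [QuasiMetric X] [QuasiMetric Y] (f g : X → Y) : ℝ≥0∞ :=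
  ⨆ x : X, qdist (f x) (g x)

/-- Two short maps are `r`-homotopic if they are connected by a chain of short maps
in which each consecutive pair is at distance `≤ r` in one direction or the other. -/
def MapHomotopic {X Y : Type*} [QuasiMetric X] [QuasiMetric Y] (r : ℝ) (f g : X → Y) : Prop :=
  Relation.ReflTransGen
    (fun u v : X → Y => IsShort u ∧ IsShort v ∧
      (mapDist u v ≤ ENNReal.ofReal r ∨ mapDist v u ≤ ENNReal.ofReal r)) f g

/-- `A ⊆ X` is an `r`-deformation retract of `X`. -/
def IsDefRetract {X : Type*} [QuasiMetric X] (r : ℝ) (A : Set X) : Prop :=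
  ∃ ρ : X → A, IsShort ρ ∧ (∀ a : A, ρ (a : X) = a) ∧
    MapHomotopic r (fun x => (ρ x : X)) id

/-- A quasimetric space is `r`-minimal if it has no proper `r`-deformation retract. -/
def RMinimal (r : ℝ) (X : Type*) [QuasiMetric X] : Prop :=
  ∀ A : Set X, IsDefRetract r A → A = Set.univ

/-- A distance-preserving bijection. -/
def IsIsometry {X Y : Type*} [QuasiMetric X] [QuasiMetric Y] (f : X → Y) : Prop :=
  Function.Bijective f ∧ ∀ x x' : X, qdist (f x) (f x') = qdist x x'

/-- Two quasimetric spaces are `r`-homotopy equivalent. -/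
def RHomotopyEquivalent (r : ℝ) (X Y : Type*) [QuasiMetric X] [QuasiMetric Y] : Prop :=
  ∃ f : X → Y, ∃ g : Y → X, IsShort f ∧ IsShort g ∧
    MapHomotopic r (g ∘ f) id ∧ MapHomotopic r (f ∘ g) id

section Aux

variable {X A : Type*} [QuasiMetric X] [QuasiMetric A]

lemma mapHomotopic_comp {r : ℝ} {u v : A → A} (h : MapHomotopic r u v)
    {ρ : X → A} (hρ : IsShort ρ) {ι : A → X} (hι : IsShort ι) :
    MapHomotopic r (ι ∘ u ∘ ρ) (ι ∘ v ∘ ρ) := by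
  refine Relation.ReflTransGen.lift (fun w => ι ∘ w ∘ ρ) ?_ _ _ h
  rintro a b ⟨ha, hb, hab⟩
  refine ⟨fun x x' => le_trans (hι _ _) (le_trans (ha _ _) (hρ _ _)),
    fun x x' => le_trans (hι _ _) (le_trans (hb _ _) (hρ _ _)), ?_⟩
  have key : ∀ p q : A → A, mapDist (ι ∘ p ∘ ρ) (ι ∘ q ∘ ρ) ≤ mapDist p q := by
    intro p q
    refine iSup_le fun x => le_trans (hι _ _) (le_iSup (fun a => qdist (p a) (q a)) (ρ x))
  rcases hab with h' | h'
  · exact Or.inl (le_trans (key _ _) h')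
  · exact Or.inr (le_trans (key _ _) h')

lemma retract_trans {r : ℝ} {A : Set X} (hA : IsDefRetract r A)
    {B : Set A} (hB : IsDefRetract r B) :
    IsDefRetract r (Subtype.val '' B : Set X) := by
  obtain ⟨ρ, hρ, hρfix, hρhom⟩ := hA
  obtain ⟨σ, hσ, hσfix, hσhom⟩ := hB
  refine ⟨fun x => ⟨((σ (ρ x) : A) : X), ⟨(σ (ρ x) : A), (σ (ρ x)).2, rfl⟩⟩, ?_, ?_, ?_⟩
  · intro x x'
    exact le_trans (hσ _ _) (hρ _ _)
  · rintro ⟨y, b, hb, rfl⟩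
    have h1 : ρ (b : X) = b := hρfix b
    have h2 : σ (b : A) = ⟨b, hb⟩ := hσfix ⟨b, hb⟩
    apply Subtype.ext
    show ((σ (ρ (b : X)) : A) : X) = (b : X)
    rw [h1, h2]
  · have step1 : MapHomotopic r (fun x : X => ((σ (ρ x) : A) : X)) (fun x : X => (ρ x : X)) := by
      have hval : IsShort (fun a : A => (a : X)) := fun a b => le_refl _
      have := mapHomotopic_comp (X := X) (A := A) hσhom hρ hval
      exact this
    exact Relation.ReflTransGen.trans step1 hρhom

lemma univ_retract (r : ℝ) : IsDefRetract r (Set.univ : Set X) := by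
  refine ⟨fun x => ⟨x, Set.mem_univ x⟩, fun x x' => le_refl _, fun a => Subtype.ext rfl, ?_⟩
  exact Relation.ReflTransGen.refl

lemma retract_equiv {r : ℝ} {A : Set X} (hA : IsDefRetract r A) :
    RHomotopyEquivalent r A X := by
  obtain ⟨ρ, hρ, hρfix, hρhom⟩ := hA
  refine ⟨Subtype.val, ρ, fun a b => le_refl _, hρ, ?_, hρhom⟩
  have : ρ ∘ (Subtype.val : A → X) = id := funext fun a => hρfix a
  rw [this]
  exact Relation.ReflTransGen.refl

end Aux
theorem stmt_5 {X : Type*} [QuasiMetric X] [Finite X] (r : ℝ) (hr : 0 ≤ r) :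
    (∀ A : Set X, IsDefRetract r A →
        (∀ B : Set X, IsDefRetract r B → Nat.card A ≤ Nat.card B) → RMinimal r A) ∧
    ∃ M : Set X, IsDefRetract r M ∧ RMinimal r M ∧ RHomotopyEquivalent r M X := by
  have hmin : ∀ A : Set X, IsDefRetract r A →
      (∀ B : Set X, IsDefRetract r B → Nat.card A ≤ Nat.card B) → RMinimal r A := by
    intro A hA hAmin B' hB'
    have hB : IsDefRetract r (Subtype.val '' B' : Set X) := retract_trans hA hB'
    have hcard : Nat.card ↥(Subtype.val '' B' : Set X) = Nat.card ↥B' :=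
      Nat.card_congr (Equiv.Set.image Subtype.val B' Subtype.val_injective).symm
    have h1 : Nat.card ↥A ≤ Nat.card ↥B' := by
      have := hAmin _ hB
      rwa [hcard] at this
    have h2 : (Set.univ : Set ↥A).ncard ≤ B'.ncard := by
      rw [Set.ncard_univ, ← Nat.card_coe_set_eq]
      exact h1
    exact Set.eq_of_subset_of_ncard_le (Set.subset_univ B') h2 Set.finite_univ
  refine ⟨hmin, ?_⟩
  set S : Set ℕ := {n | ∃ A : Set X, IsDefRetract r A ∧ Nat.card ↥A = n} with hS
  have hSne : S.Nonempty := ⟨_, Set.univ, univ_retract r, rfl⟩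
  obtain ⟨M, hM, hMcard⟩ := Nat.sInf_mem hSne
  refine ⟨M, hM, hmin M hM ?_, retract_equiv hM⟩
  intro B hB
  rw [hMcard]
  exact Nat.sInf_le ⟨B, hB, rfl⟩
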